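/- arXiv:1003.2429 — 7 statements merged into one kernel-verified Lean document; each statement's English description precedes it below -/
import Mathlib

section
/- Let G be a signed, undirected complete graph in which every triangle has an odd number of positive edges. Then the vertices of G can be partitioned into two sets A and B (possibly one empty) such that every edge within A and within B is positive, and every edge with one endpoint in A and the other in B is negative. -/
/-- Cartwright–Harary: a signed complete graph in which every triangle has an
odd number of positive edges can be partitioned into two sets (one possibly
empty) with positive edges inside the sets and negative edges across. -/
theorem stmt0 {V : Type*} [Fintype V] (s : V → V → ℤ)
    (hsymm : ∀ u v : V, s u v = s v u)
    (hsign : ∀ u v : V, u ≠ v → s u v = 1 ∨ s u v = -1)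
    (htri : ∀ u v w : V, u ≠ v → v ≠ w → u ≠ w →
      Odd ((if s u v = 1 then 1 else 0) + (if s v w = 1 then 1 else 0) +
        (if s u w = 1 then 1 else 0) : ℕ)) :
    ∃ A : Set V, ∀ u v : V, u ≠ v →
      (((u ∈ A) ↔ (v ∈ A)) → s u v = 1) ∧ (¬ ((u ∈ A) ↔ (v ∈ A)) → s u v = -1) := by
  by_cases hne : Nonempty V
  · obtain ⟨v₀⟩ := hne
    have key : ∀ a b : V, a ≠ b → a ≠ v₀ → b ≠ v₀ → s a b = s v₀ a * s v₀ b := by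
      intro a b hab ha hb
      have h1 := hsign v₀ a (Ne.symm ha)
      have h2 := hsign a b hab
      have h3 := hsign v₀ b (Ne.symm hb)
      have ht := htri v₀ a b (Ne.symm ha) hab (Ne.symm hb)
      rcases h1 with h1 | h1 <;> rcases h2 with h2 | h2 <;> rcases h3 with h3 | h3 <;>
        simp_all [Nat.odd_iff]
    refine ⟨{v | s v₀ v = 1 ∨ v = v₀}, fun u v huv => ?_⟩
    by_cases hu : u = v₀
    · subst hu
      have h := hsign u v huv
      constructor
      · intro hiff
        have : s u v = 1 ∨ v = u := hiff.mp (Or.inr rfl)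
        rcases this with h' | h'
        · exact h'
        · exact absurd h'.symm huv
      · intro hniff
        rcases h with h | h
        · exact absurd (Iff.intro (fun _ => Or.inl h) (fun _ => Or.inr rfl)) hniff
        · exact h
    · by_cases hv : v = v₀
      · subst hv
        have h := hsign u v hu
        rw [hsymm u v] at *
        constructor
        · intro hiff
          have : s v u = 1 ∨ u = v := hiff.mpr (Or.inr rfl)
          rcases this with h' | h'
          · exact h'
          · exact absurd h' hu
        · intro hniff
          rcases h with h | h
          · exact absurd (Iff.intro (fun _ => Or.inr rfl) (fun _ => Or.inl h)) hniff
          · exact h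
      · have hk := key u v huv hu hv
        have h1 := hsign v₀ u (Ne.symm hu)
        have h2 := hsign v₀ v (Ne.symm hv)
        constructor
        · intro hiff
          simp only [Set.mem_setOf_eq, hu, hv, or_false] at hiff
          rcases h1 with h1 | h1 <;> rcases h2 with h2 | h2 <;>
            simp [h1, h2] at hk hiff ⊢ <;> omega
        · intro hniff
          simp only [Set.mem_setOf_eq, hu, hv, or_false] at hniff
          rcases h1 with h1 | h1 <;> rcases h2 with h2 | h2 <;>
            simp [h1, h2] at hk hniff ⊢ <;> omega
  · exact ⟨∅, fun u _ _ => absurd ⟨u⟩ hne⟩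
end

section
/- Let G be a signed complete graph in which every triangle has an odd number of positive edges. Then the relation 'u = v or the edge {u,v} is positive' is an equivalence relation on the vertices of G with at most two equivalence classes. -/
/-- In a signed complete graph where every triangle has an odd number of
positive edges, the relation "equal or joined by a positive edge" is an
equivalence relation with at most two classes. -/
theorem stmt1 {V : Type*} [Fintype V] [Nonempty V] (s : V → V → ℤ)
    (hsymm : ∀ u v : V, s u v = s v u)
    (hsign : ∀ u v : V, u ≠ v → s u v = 1 ∨ s u v = -1)
    (htri : ∀ u v w : V, u ≠ v → v ≠ w → u ≠ w →
      Odd ((if s u v = 1 then 1 else 0) + (if s v w = 1 then 1 else 0) +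
        (if s u w = 1 then 1 else 0) : ℕ)) :
    Equivalence (fun u v : V => u = v ∨ s u v = 1) ∧
    ∃ a b : V, ∀ v : V, (a = v ∨ s a v = 1) ∨ (b = v ∨ s b v = 1) := by
  classical
  have trans : ∀ u v w : V, s u v = 1 → s v w = 1 → u ≠ w → s u w = 1 := by
    intro u v w h1 h2 huw
    by_cases huv : u = v
    · subst huv; exact h2
    by_cases hvw : v = w
    · subst hvw; exact h1
    have := htri u v w huv hvw huw
    by_contra h3
    simp [h1, h2, h3, Nat.odd_iff] at this
  constructor
  · refine ⟨fun x => Or.inl rfl, ?_, ?_⟩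
    · rintro u v (rfl | h)
      · exact Or.inl rfl
      · right; rw [hsymm]; exact h
    · rintro u v w (rfl | h1) (rfl | h2)
      · exact Or.inl rfl
      · exact Or.inr h2
      · exact Or.inr h1
      · by_cases huw : u = w
        · exact Or.inl huw
        · exact Or.inr (trans u v w h1 h2 huw)
  · obtain ⟨a⟩ := ‹Nonempty V›
    by_cases h : ∀ v : V, a = v ∨ s a v = 1
    · exact ⟨a, a, fun v => Or.inl (h v)⟩
    · push_neg at h
      obtain ⟨b, hab, hsab⟩ := h
      refine ⟨a, b, fun v => ?_⟩
      by_cases hav : a = v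
      · exact Or.inl (Or.inl hav)
      by_cases hbv : b = v
      · exact Or.inr (Or.inl hbv)
      by_cases h1 : s a v = 1
      · exact Or.inl (Or.inr h1)
      by_cases h2 : s b v = 1
      · exact Or.inr (Or.inr h2)
      · exfalso
        have hsbv : s b v = 1 := by
          have := htri a b v hab hbv hav
          have hab' : s a b ≠ 1 := hsab
          simp [hab', h1, Nat.odd_iff] at this
          split at this <;> simp_all
        exact h2 hsbv
end

section
/- Let G be a signed complete graph on a finite vertex set. Then every triangle of G has an odd number of positive edges if and only if every cycle of G has an even number of negative edges. -/
/-- In a signed complete graph, every triangle has an odd number of positive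
edges iff every cycle has an even number of negative edges. -/
theorem stmt3 {V : Type*} [Fintype V] (s : V → V → ℤ)
    (hsymm : ∀ u v : V, s u v = s v u)
    (hsign : ∀ u v : V, u ≠ v → s u v = 1 ∨ s u v = -1) :
    (∀ u v w : V, u ≠ v → v ≠ w → u ≠ w →
      Odd ((if s u v = 1 then 1 else 0) + (if s v w = 1 then 1 else 0) +
        (if s u w = 1 then 1 else 0) : ℕ)) ↔
    (∀ (k : ℕ) (v : ℕ → V), 3 ≤ k → Set.InjOn v (Set.Iio k) → v k = v 0 →
      Even (((Finset.range k).filter fun i => s (v i) (v (i + 1)) = -1).card)) := by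
  classical
  constructor
  · intro hA k v hk hinj hcyc
    have hA' : ∀ u x w : V, u ≠ x → x ≠ w → u ≠ w → s u x * s x w * s u w = 1 := by
      intro u x w h1 h2 h3
      have ho := hA u x w h1 h2 h3
      rcases hsign u x h1 with a | a <;> rcases hsign x w h2 with b | b <;>
        rcases hsign u w h3 with c | c <;>
        simp [a, b, c, Nat.odd_iff] at ho ⊢
    set f : V → ℤ := fun x => if x = v 0 then 1 else s (v 0) x with hfdef
    have hf : ∀ x, f x = 1 ∨ f x = -1 := by
      intro x
      by_cases hx : x = v 0
      · left; simp [hfdef, hx]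
      · simpa [hfdef, hx] using hsign (v 0) x (Ne.symm hx)
    have hfs : ∀ x y : V, x ≠ y → s x y = f x * f y := by
      intro x y hxy
      by_cases hx : x = v 0
      · subst hx
        simp [hfdef, Ne.symm hxy]
      · by_cases hy : y = v 0
        · subst hy
          simp only [hfdef, if_pos rfl, if_neg hx, mul_one]
          exact hsymm x (v 0)
        · have h := hA' (v 0) x y (Ne.symm hx) hxy (Ne.symm hy)
          simp only [hfdef, if_neg hx, if_neg hy]
          rcases hsign (v 0) x (Ne.symm hx) with a | a <;>
            rcases hsign (v 0) y (Ne.symm hy) with c | c <;>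
            rw [a, c] at h ⊢ <;> nlinarith [h]
    have hne : ∀ i, i < k → v i ≠ v (i + 1) := by
      intro i hi
      rcases eq_or_lt_of_le (Nat.succ_le_of_lt hi) with h | h
      · rw [show i + 1 = k from h, hcyc]
        intro hcon
        have : i = 0 := hinj (Set.mem_Iio.mpr hi)
          (Set.mem_Iio.mpr (by omega)) hcon
        omega
      · intro hcon
        have : i = i + 1 := hinj (Set.mem_Iio.mpr hi)
          (Set.mem_Iio.mpr h) hcon
        omega
    have hprod1 : ∏ i ∈ Finset.range k, s (v i) (v (i + 1)) = 1 := by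
      have hcg : ∀ i ∈ Finset.range k, s (v i) (v (i + 1)) = f (v i) * f (v (i + 1)) := by
        intro i hi
        exact hfs _ _ (hne i (Finset.mem_range.mp hi))
      rw [Finset.prod_congr rfl hcg, Finset.prod_mul_distrib]
      have hshift : (∏ i ∈ Finset.range k, f (v (i + 1))) = ∏ i ∈ Finset.range k, f (v i) := by
        have h1 := Finset.prod_range_succ (fun i => f (v i)) k
        have h2 := Finset.prod_range_succ' (fun i => f (v i)) k
        simp only [hcyc] at h1
        rcases hf (v 0) with h | h <;> rw [h] at h1 h2 <;> nlinarith [h1, h2]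
      rw [hshift, ← Finset.prod_mul_distrib]
      have : ∀ i ∈ Finset.range k, f (v i) * f (v i) = 1 := by
        intro i _
        rcases hf (v i) with h | h <;> rw [h] <;> ring
      rw [Finset.prod_congr rfl this, Finset.prod_const_one]
    have hsplit := Finset.prod_filter_mul_prod_filter_not (Finset.range k)
      (fun i => s (v i) (v (i + 1)) = -1) (fun i => s (v i) (v (i + 1)))
    have hneg : (∏ i ∈ (Finset.range k).filter (fun i => s (v i) (v (i + 1)) = -1),
        s (v i) (v (i + 1))) =
        (-1) ^ ((Finset.range k).filter (fun i => s (v i) (v (i + 1)) = -1)).card := by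
      rw [Finset.prod_congr rfl (fun i hi => (Finset.mem_filter.mp hi).2),
        Finset.prod_const]
    have hpos : (∏ i ∈ (Finset.range k).filter (fun i => ¬ s (v i) (v (i + 1)) = -1),
        s (v i) (v (i + 1))) = 1 := by
      rw [Finset.prod_congr rfl (fun i hi => ?_), Finset.prod_const_one]
      have hi' := Finset.mem_filter.mp hi
      rcases hsign _ _ (hne i (Finset.mem_range.mp hi'.1)) with h | h
      · exact h
      · exact absurd h hi'.2
    rw [hneg, hpos, hprod1, mul_one] at hsplit
    exact (neg_one_pow_eq_one_iff_even (by norm_num : (-1 : ℤ) ≠ 1)).mp hsplit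
  · intro hB a b c hab hbc hac
    set g : ℕ → V := fun i => if i % 3 = 0 then a else if i % 3 = 1 then b else c with hgdef
    have hg0 : g 0 = a := by simp [hgdef]
    have hg1 : g 1 = b := by simp [hgdef]
    have hg2 : g 2 = c := by simp [hgdef]
    have hg3 : g 3 = a := by simp [hgdef]
    have hinj : Set.InjOn g (Set.Iio 3) := by
      intro i hi j hj hij
      simp only [Set.mem_Iio] at hi hj
      interval_cases i <;> interval_cases j <;>
        simp_all [hg0, hg1, hg2]
    have hE := hB 3 g le_rfl hinj (hg3.trans hg0.symm)
    have hcard : ((Finset.range 3).filter fun i => s (g i) (g (i + 1)) = -1).card =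
        (if s a b = -1 then 1 else 0) + (if s b c = -1 then 1 else 0) +
        (if s a c = -1 then 1 else 0) := by
      rw [Finset.card_filter]
      simp only [Finset.sum_range_succ, Finset.sum_range_zero, Nat.reduceAdd,
        hg0, hg1, hg2, hg3, hsymm c a]
      ring
    rw [hcard] at hE
    rcases hsign a b hab with h1 | h1 <;> rcases hsign b c hbc with h2 | h2 <;>
      rcases hsign a c hac with h3 | h3 <;>
      simp [h1, h2, h3, Nat.even_iff, Nat.odd_iff] at hE ⊢
end

section
/- Let G be a signed directed tournament in which every set of three vertices is status-consistent. Then there exists a linear ordering v_1, ..., v_n of the vertices such that every positive edge (v_i, v_j) satisfies i < j and every negative edge (v_i, v_j) satisfies i > j. -/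
/-- Three vertices of a signed directed graph are status-consistent if they can
be assigned distinct real status values such that positive edges among them go
from lower to higher status and negative edges from higher to lower status. -/
def statusConsistent {V : Type*} (E : V → V → Prop) (sg : V → V → ℤ)
    (u v w : V) : Prop :=
  ∃ x : V → ℝ, x u ≠ x v ∧ x v ≠ x w ∧ x u ≠ x w ∧
    ∀ a b : V, (a = u ∨ a = v ∨ a = w) → (b = u ∨ b = v ∨ b = w) → E a b →
      (sg a b = 1 → x a < x b) ∧ (sg a b = -1 → x b < x a)

/-- If every triple of vertices of a signed directed tournament is
status-consistent, then there is a linear ordering of the vertices such that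
positive edges point forward and negative edges backward. -/
theorem stmt5 {V : Type*} [Fintype V] (E : V → V → Prop) (sg : V → V → ℤ)
    (hirr : ∀ v : V, ¬ E v v)
    (htour : ∀ u v : V, u ≠ v → (E u v ↔ ¬ E v u))
    (hsg : ∀ u v : V, E u v → sg u v = 1 ∨ sg u v = -1)
    (hsc : ∀ u v w : V, u ≠ v → v ≠ w → u ≠ w → statusConsistent E sg u v w) :
    ∃ f : V → ℕ, Function.Injective f ∧
      ∀ u v : V, E u v → (sg u v = 1 → f u < f v) ∧ (sg u v = -1 → f v < f u) := by
  classical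
  -- R u v : "u is below v"
  set R : V → V → Prop := fun u v => (E u v ∧ sg u v = 1) ∨ (E v u ∧ sg v u = -1) with hRdef
  have hne : ∀ u v, R u v → u ≠ v := by
    rintro u v (⟨h, _⟩ | ⟨h, _⟩) rfl <;> exact hirr u h
  have hasym : ∀ u v, R u v → ¬ R v u := by
    rintro u v (⟨h1, h2⟩ | ⟨h1, h2⟩) (⟨h3, h4⟩ | ⟨h3, h4⟩)
    · exact (htour u v (fun h => hirr u (h ▸ h1))).mp h1 h3
    · omega
    · omega
    · exact (htour v u (fun h => hirr v (h ▸ h1))).mp h1 h3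
  have htrich : ∀ u v, u ≠ v → R u v ∨ R v u := by
    intro u v huv
    by_cases h : E u v
    · rcases hsg u v h with hs | hs
      · exact Or.inl (Or.inl ⟨h, hs⟩)
      · exact Or.inr (Or.inr ⟨h, hs⟩)
    · have h' : E v u := by
        by_contra h''
        exact h ((htour u v huv).mpr h'')
      rcases hsg v u h' with hs | hs
      · exact Or.inr (Or.inl ⟨h', hs⟩)
      · exact Or.inl (Or.inr ⟨h', hs⟩)
  have htrans : ∀ u v w, R u v → R v w → R u w := by
    intro u v w huv hvw
    by_cases huw : u = w
    · subst huw; exact absurd hvw (hasym _ _ huv)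
    obtain ⟨x, _, _, _, hx⟩ := hsc u v w (hne u v huv) (hne v w hvw) huw
    have h1 : x u < x v := by
      rcases huv with ⟨h1, h2⟩ | ⟨h1, h2⟩
      · exact (hx u v (Or.inl rfl) (Or.inr (Or.inl rfl)) h1).1 h2
      · exact (hx v u (Or.inr (Or.inl rfl)) (Or.inl rfl) h1).2 h2
    have h2 : x v < x w := by
      rcases hvw with ⟨h1, h2⟩ | ⟨h1, h2⟩
      · exact (hx v w (Or.inr (Or.inl rfl)) (Or.inr (Or.inr rfl)) h1).1 h2
      · exact (hx w v (Or.inr (Or.inr rfl)) (Or.inr (Or.inl rfl)) h1).2 h2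
    rcases htrich u w huw with h | h
    · exact h
    · exfalso
      have h3 : x w < x u := by
        rcases h with ⟨h1, h2⟩ | ⟨h1, h2⟩
        · exact (hx w u (Or.inr (Or.inr rfl)) (Or.inl rfl) h1).1 h2
        · exact (hx u w (Or.inl rfl) (Or.inr (Or.inr rfl)) h1).2 h2
      linarith
  -- rank function
  let f : V → ℕ := fun v => (Finset.univ.filter (fun u => R u v)).card
  have hmono : ∀ u v, R u v → f u < f v := by
    intro u v huv
    apply Finset.card_lt_card
    constructor
    · intro w hw
      simp only [Finset.mem_filter, Finset.mem_univ, true_and] at hw ⊢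
      exact htrans w u v hw huv
    · intro hsub
      have := hsub (by simp [huv] : u ∈ Finset.univ.filter (fun w => R w v))
      simp only [Finset.mem_filter, Finset.mem_univ, true_and] at this
      exact hasym u u this (by exact this)
  refine ⟨f, ?_, ?_⟩
  · intro u v huv
    by_contra h
    rcases htrich u v h with h' | h'
    · exact absurd huv (Nat.ne_of_lt (hmono u v h'))
    · exact absurd huv.symm (Nat.ne_of_lt (hmono v u h'))
  · intro u v hE
    constructor
    · intro hs; exact hmono u v (Or.inl ⟨hE, hs⟩)
    · intro hs; exact hmono v u (Or.inr ⟨hE, hs⟩)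
end

section
/- Let G be a signed complete graph on n >= 2 vertices such that every triangle has an odd number of positive edges, and suppose G has at least one negative edge. Then the 'positive-edge' equivalence classes partition the vertices into exactly two nonempty sets. -/
/-- In a balanced signed complete graph on at least two vertices with at least
one negative edge, the positive-edge equivalence relation has exactly two
nonempty classes. -/
theorem stmt10 {V : Type*} [Fintype V] (s : V → V → ℤ)
    (hsymm : ∀ u v : V, s u v = s v u)
    (hsign : ∀ u v : V, u ≠ v → s u v = 1 ∨ s u v = -1)
    (htri : ∀ u v w : V, u ≠ v → v ≠ w → u ≠ w →
      Odd ((if s u v = 1 then 1 else 0) + (if s v w = 1 then 1 else 0) +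
        (if s u w = 1 then 1 else 0) : ℕ))
    (hcard : 2 ≤ Fintype.card V)
    (hneg : ∃ u v : V, u ≠ v ∧ s u v = -1) :
    ∃ a b : V, ¬ (a = b ∨ s a b = 1) ∧
      ∀ v : V, (a = v ∨ s a v = 1) ∨ (b = v ∨ s b v = 1) := by
  obtain ⟨a, b, hab, hs⟩ := hneg
  refine ⟨a, b, ?_, ?_⟩
  · rintro (h | h)
    · exact hab h
    · omega
  · intro v
    by_cases hva : a = v
    · exact Or.inl (Or.inl hva)
    by_cases hvb : b = v
    · exact Or.inr (Or.inl hvb)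
    have h := htri a v b (fun h => hva h) (fun h => hvb h.symm) hab
    have hns : ¬ (s a b = 1) := by omega
    simp only [hns, if_false] at h
    have hvb' : s v b = s b v := hsymm v b
    by_cases h1 : s a v = 1
    · exact Or.inl (Or.inr h1)
    · right; right
      simp only [h1, if_false] at h
      by_cases h2 : s v b = 1
      · omega
      · simp [h2] at h
end

section
/- Let G be a signed complete graph. Every triangle of G has an odd number of positive edges if and only if there exists a function f from vertices to {+1,-1} such that the sign of every edge {u,v} equals f(u) * f(v). -/
/-- A signed complete graph has every triangle with an odd number of positive
edges iff there is a two-coloring f : V → {±1} with s u v = f u * f v. -/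
theorem stmt12 {V : Type*} [Fintype V] (s : V → V → ℤ)
    (hsymm : ∀ u v : V, s u v = s v u)
    (hsign : ∀ u v : V, u ≠ v → s u v = 1 ∨ s u v = -1) :
    (∀ u v w : V, u ≠ v → v ≠ w → u ≠ w →
      Odd ((if s u v = 1 then 1 else 0) + (if s v w = 1 then 1 else 0) +
        (if s u w = 1 then 1 else 0) : ℕ)) ↔
    (∃ f : V → ℤ, (∀ v : V, f v = 1 ∨ f v = -1) ∧
      ∀ u v : V, u ≠ v → s u v = f u * f v) := by
  constructor
  · intro h
    classical
    by_cases hne : Nonempty V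
    · obtain ⟨v0⟩ := hne
      refine ⟨fun v => if v = v0 then 1 else s v0 v, fun v => ?_, fun u v huv => ?_⟩
      · by_cases hv : v = v0
        · simp [hv]
        · simpa [hv] using hsign v0 v (fun hh => hv hh.symm)
      · beta_reduce
        by_cases hu : u = v0
        · have hv : ¬ v = v0 := fun hh => huv (hu.trans hh.symm)
          rw [if_pos hu, if_neg hv, one_mul, hu]
        · by_cases hv : v = v0
          · rw [if_neg hu, if_pos hv, mul_one, hv, hsymm u v0]
          · have h3 := h u v0 v hu (fun hh => hv hh.symm) huv
            have h1 := hsign u v0 hu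
            have h2 := hsign v0 v (fun hh => hv hh.symm)
            have h4 := hsign u v huv
            have hg : (if u = v0 then (1:ℤ) else s v0 u) * (if v = v0 then 1 else s v0 v) = s u v0 * s v0 v := by
              rw [if_neg hu, if_neg hv, hsymm v0 u]
            rw [hg]
            rcases h1 with h1 | h1 <;> rcases h2 with h2 | h2 <;>
              rcases h4 with h4 | h4 <;>
              simp [h1, h2, h4, Nat.odd_iff] at h3 ⊢
    · exact ⟨fun _ => 1, fun v => Or.inl rfl, fun u _ _ => absurd ⟨u⟩ hne⟩
  · rintro ⟨f, hf, hsf⟩ u v w huv hvw huw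
    rw [hsf u v huv, hsf v w hvw, hsf u w huw]
    rcases hf u with hu | hu <;> rcases hf v with hv | hv <;>
      rcases hf w with hw | hw <;> simp [hu, hv, hw] <;> decide
end

section
/- Let G be a signed, undirected, connected graph (not necessarily complete) in which every cycle has an even number of negative edges. Then the vertices of G can be partitioned into two sets A and B such that all edges within A and within B are positive and all edges between A and B are negative. -/
open Finset

private def eSum {V : Type*} (s : V → V → ℤ) (p : ℕ → V) (n : ℕ) : ZMod 2 :=
  ∑ k ∈ Finset.range n, if s (p k) (p (k + 1)) = -1 then 1 else 0

private lemma walk_exists {V : Type*} {Adj : V → V → Prop} {u v : V}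
    (h : Relation.ReflTransGen Adj u v) :
    ∃ (n : ℕ) (p : ℕ → V), p 0 = u ∧ p n = v ∧ ∀ i < n, Adj (p i) (p (i + 1)) := by
  induction h with
  | refl => exact ⟨0, fun _ => u, rfl, rfl, by omega⟩
  | @tail b c hub hbc ih =>
      obtain ⟨m, p, h0, hn, hadj⟩ := ih
      refine ⟨m + 1, fun k => if k ≤ m then p k else c, by simpa using h0, by simp, ?_⟩
      intro i hi
      rcases Nat.lt_or_ge i m with h | h
      · simpa [Nat.le_of_lt h, Nat.succ_le_of_lt h] using hadj i h
      · have hi' : i = m := by omega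
        subst hi'
        simpa [hn] using hbc

private lemma eSum_closed {V : Type*} {Adj : V → V → Prop} {s : V → V → ℤ}
    (hirr : ∀ v : V, ¬ Adj v v)
    (hssymm : ∀ u v : V, s u v = s v u)
    (hcyc : ∀ (k : ℕ) (v : ℕ → V), 3 ≤ k → Set.InjOn v (Set.Iio k) →
      v k = v 0 → (∀ i < k, Adj (v i) (v (i + 1))) →
      Even (((Finset.range k).filter fun i => s (v i) (v (i + 1)) = -1).card)) :
    ∀ n (p : ℕ → V), p n = p 0 → (∀ i < n, Adj (p i) (p (i + 1))) →
      eSum s p n = 0 := by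
  intro n
  induction n using Nat.strong_induction_on with
  | _ n ih =>
  intro p hcl hadj
  match n, ih, hcl, hadj with
  | 0, ih, hcl, hadj => simp [eSum]
  | 1, ih, hcl, hadj =>
      have h := hadj 0 one_pos
      rw [hcl] at h
      exact absurd h (hirr _)
  | 2, ih, hcl, hadj =>
      have h : s (p 1) (p 2) = s (p 0) (p 1) := by rw [hcl, hssymm]
      rw [eSum, Finset.sum_range_succ, Finset.sum_range_one, h]
      exact CharTwo.add_self_eq_zero _
  | (N + 3), ih, hcl, hadj =>
      by_cases hinj : Set.InjOn p (Set.Iio (N + 3))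
      · have hev := hcyc (N + 3) p (by omega) hinj hcl hadj
        obtain ⟨m, hm⟩ := hev
        have : eSum s p (N + 3)
            = ((((Finset.range (N + 3)).filter fun i => s (p i) (p (i + 1)) = -1).card : ℕ) : ZMod 2) := by
          rw [Finset.card_filter]
          push_cast
          rfl
        rw [this, hm]
        push_cast
        exact CharTwo.add_self_eq_zero _
      · -- find repeated indices
        rw [Set.InjOn] at hinj
        push_neg at hinj
        obtain ⟨a, ha, b, hb, hab, hne⟩ := hinj
        simp only [Set.mem_Iio] at ha hb
        -- wlog i < j
        obtain ⟨i, j, hij, hjN, hpij⟩ : ∃ i j, i < j ∧ j < N + 3 ∧ p i = p j := by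
          rcases Nat.lt_or_ge a b with h | h
          · exact ⟨a, b, h, hb, hab⟩
          · exact ⟨b, a, by omega, ha, hab.symm⟩
        set d := j - i with hd
        set m := N + 3 - d with hmdef
        have hdpos : 0 < d := by omega
        have hid : i + d = j := by omega
        have hmlt : m < N + 3 := by omega
        have him : i + 1 ≤ m := by omega
        set p1 : ℕ → V := fun k => p (i + k) with hp1
        set p2 : ℕ → V := fun k => if k < i then p k else p (k + d) with hp2
        have h1 : eSum s p1 d = 0 := by
          apply ih d (by omega)
          · show p (i + d) = p (i + 0)
            rw [hid, Nat.add_zero]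
            exact hpij.symm
          · intro k hk
            have : i + k < N + 3 := by omega
            simpa [hp1, Nat.add_assoc] using hadj (i + k) this
        have hp2eq : ∀ k, i ≤ k → p2 k = p (k + d) := by
          intro k hk
          simp [hp2, Nat.not_lt.mpr hk]
        have hp2step : ∀ k, k + 1 ≤ i → p2 (k + 1) = p (k + 1) := by
          intro k hk
          rcases Nat.lt_or_ge (k + 1) i with h | h
          · simp [hp2, h]
          · have hki : k + 1 = i := by omega
            rw [hp2eq _ h, hki, hid, ← hpij, ← hki]
        have h2 : eSum s p2 m = 0 := by
          apply ih m hmlt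
          · have hm1 : p2 m = p 0 := by
              rw [hp2eq m (by omega), show m + d = N + 3 by omega, hcl]
            have hm0 : p2 0 = p 0 := by
              rcases Nat.eq_zero_or_pos i with h | h
              · rw [hp2eq 0 (by omega), Nat.zero_add, show d = j by omega, ← hpij, h]
              · simp [hp2, h]
            rw [hm1, hm0]
          · intro k hk
            rcases Nat.lt_or_ge (k + 1) i with h | h
            · have : p2 k = p k := by simp [hp2, show k < i by omega]
              rw [this, hp2step k (by omega)]
              exact hadj k (by omega)
            · rcases Nat.lt_or_ge k i with h' | h'
              · have hki : k + 1 = i := by omega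
                have : p2 k = p k := by simp [hp2, h']
                rw [this, hp2step k (by omega)]
                exact hadj k (by omega)
              · rw [hp2eq k h', hp2eq (k + 1) (by omega)]
                have : k + d < N + 3 := by omega
                simpa [show k + 1 + d = k + d + 1 by omega] using hadj (k + d) this
        -- sum decomposition
        have key : eSum s p (N + 3) = eSum s p1 d + eSum s p2 m := by
          set f : ℕ → ZMod 2 := fun k => if s (p k) (p (k + 1)) = -1 then 1 else 0 with hfdef
          have e1 : eSum s p1 d = ∑ k ∈ Finset.Ico i j, f k := by
            rw [Finset.sum_Ico_eq_sum_range]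
            apply Finset.sum_congr (by rw [hd])
            intro k _
            simp [hp1, hfdef, Nat.add_assoc]
          have e2 : eSum s p2 m = (∑ k ∈ Finset.range i, f k) + ∑ k ∈ Finset.Ico j (N + 3), f k := by
            set g : ℕ → ZMod 2 := fun k => if s (p2 k) (p2 (k + 1)) = -1 then 1 else 0 with hgdef
            have hsplit : eSum s p2 m = (∑ k ∈ Finset.range i, g k) + ∑ k ∈ Finset.Ico i m, g k := by
              rw [eSum, Finset.range_eq_Ico,
                ← Finset.sum_Ico_consecutive g (Nat.zero_le i) (by omega : i ≤ m),
                ← Finset.range_eq_Ico]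
            rw [hsplit]
            congr 1
            · apply Finset.sum_congr rfl
              intro k hk
              simp only [Finset.mem_range] at hk
              have h1 : p2 k = p k := by simp [hp2, hk]
              simp only [hgdef, hfdef, h1, hp2step k hk]
            · rw [Finset.sum_Ico_eq_sum_range, Finset.sum_Ico_eq_sum_range]
              apply Finset.sum_congr (by congr 1; omega)
              intro k hk
              simp only [Finset.mem_range] at hk
              simp only [hgdef, hfdef, hp2eq (i + k) (by omega), hp2eq (i + k + 1) (by omega)]
              have ea : i + k + d = j + k := by omega
              have eb : i + k + 1 + d = j + k + 1 := by omega
              rw [ea, eb]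
          have e0 : eSum s p (N + 3) = (∑ k ∈ Finset.range i, f k) + (∑ k ∈ Finset.Ico i j, f k)
              + ∑ k ∈ Finset.Ico j (N + 3), f k := by
            rw [eSum, Finset.range_eq_Ico,
              ← Finset.sum_Ico_consecutive f (Nat.zero_le j) (by omega : j ≤ N + 3),
              ← Finset.sum_Ico_consecutive f (Nat.zero_le i) (le_of_lt hij),
              ← Finset.range_eq_Ico]
          rw [e0, e1, e2]
          ring
        rw [key, h1, h2, add_zero]

/-- Harary's theorem: a connected signed graph in which every cycle has an
even number of negative edges can be partitioned into two sets with positive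
edges inside the sets and negative edges across. -/
theorem stmt18 {V : Type*} [Fintype V] (Adj : V → V → Prop) (s : V → V → ℤ)
    (hAsymm : ∀ u v : V, Adj u v → Adj v u)
    (hirr : ∀ v : V, ¬ Adj v v)
    (hssymm : ∀ u v : V, s u v = s v u)
    (hsign : ∀ u v : V, Adj u v → s u v = 1 ∨ s u v = -1)
    (hconn : ∀ u v : V, Relation.ReflTransGen Adj u v)
    (hcyc : ∀ (k : ℕ) (v : ℕ → V), 3 ≤ k → Set.InjOn v (Set.Iio k) →
      v k = v 0 → (∀ i < k, Adj (v i) (v (i + 1))) →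
      Even (((Finset.range k).filter fun i => s (v i) (v (i + 1)) = -1).card)) :
    ∃ A : Set V, ∀ u v : V, Adj u v →
      (((u ∈ A) ↔ (v ∈ A)) → s u v = 1) ∧ (¬ ((u ∈ A) ↔ (v ∈ A)) → s u v = -1) := by
  classical
  cases isEmpty_or_nonempty V with
  | inl h => exact ⟨∅, fun u => (h.false u).elim⟩
  | inr h =>
    obtain ⟨v0⟩ := h
    have hclosed := eSum_closed hirr hssymm hcyc
    have hex : ∀ w : V, ∃ (n : ℕ) (p : ℕ → V), p 0 = v0 ∧ p n = w ∧
        ∀ i < n, Adj (p i) (p (i + 1)) := fun w => walk_exists (hconn v0 w)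
    choose n p h0 h1 hadj2 using hex
    set f : V → ZMod 2 := fun w => eSum s (p w) (n w) with hf
    have key : ∀ u w : V, Adj u w →
        f u + (if s u w = -1 then 1 else 0) + f w = 0 := by
      intro u w huw
      set a := n u with hadef
      set b := n w with hbdef
      set L := a + 1 + b with hL
      set r : ℕ → V := fun k => if k ≤ a then p u k else p w (L - k) with hr
      have hra : ∀ k, k ≤ a → r k = p u k := fun k hk => by simp [hr, hk]
      have hrb : ∀ k, a < k → r k = p w (L - k) := fun k hk => by
        simp [hr, Nat.not_le.mpr hk]
      have hrcl : r L = r 0 := by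
        rw [hra 0 (Nat.zero_le a), hrb L (by omega), Nat.sub_self, h0, h0]
      have hradj : ∀ k < L, Adj (r k) (r (k + 1)) := by
        intro k hk
        rcases Nat.lt_or_ge k a with h | h
        · rw [hra k (le_of_lt h), hra (k + 1) h]
          exact hadj2 u k h
        · rcases Nat.eq_or_lt_of_le h with h' | h'
          · have hpu : p u k = u := by rw [← h']; exact h1 u
            rw [hra k (le_of_eq h'.symm), hrb (k + 1) (by omega),
              show L - (k + 1) = b by omega, hpu, h1]
            exact huw
          · rw [hrb k h', hrb (k + 1) (by omega)]
            have h2 : L - (k + 1) < b := by omega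
            have h3 : L - k = (L - (k + 1)) + 1 := by omega
            rw [h3]
            exact hAsymm _ _ (hadj2 w _ h2)
      have h0' := hclosed L r hrcl hradj
      have hdecomp : eSum s r L = eSum s (p u) a + (if s u w = -1 then 1 else 0)
          + eSum s (p w) b := by
        rw [eSum, show L = (a + 1) + b by omega, Finset.sum_range_add]
        congr 1
        · rw [Finset.sum_range_succ, eSum]
          congr 1
          · apply Finset.sum_congr rfl
            intro k hk
            simp only [Finset.mem_range] at hk
            rw [hra k (le_of_lt hk), hra (k + 1) hk]
          · rw [hra a le_rfl, hrb (a + 1) (by omega), show L - (a + 1) = b by omega,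
              h1, h1]
        · rw [eSum]
          conv_rhs => rw [← Finset.sum_range_reflect]
          apply Finset.sum_congr rfl
          intro k hk
          simp only [Finset.mem_range] at hk
          rw [hrb (a + 1 + k) (by omega), hrb (a + 1 + k + 1) (by omega),
            show L - (a + 1 + k) = b - k by omega,
            show L - (a + 1 + k + 1) = b - k - 1 by omega,
            hssymm, show b - k - 1 = b - 1 - k by omega,
            show b - k = b - 1 - k + 1 by omega]
      rw [hdecomp] at h0'
      exact h0'
    refine ⟨{w : V | f w = 0}, fun u w huw => ?_⟩
    have hk := key u w huw
    simp only [Set.mem_setOf_eq]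
    have main : ∀ x y c : ZMod 2, x + c + y = 0 →
        (((x = 0) ↔ (y = 0)) → c = 0) ∧ (¬((x = 0) ↔ (y = 0)) → c = 1) := by decide
    obtain ⟨hc0, hc1⟩ := main (f u) (f w) _ hk
    constructor
    · intro hiff
      have := hc0 hiff
      rcases hsign u w huw with h | h
      · exact h
      · rw [h] at this; simp at this
    · intro hniff
      have := hc1 hniff
      by_contra hne
      rw [if_neg hne] at this
      exact absurd this (by decide)
end
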